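/- Let p be a prime, p ≥ 3, and consider the cyclic group ℤ_p. For any j with 0 ≤ j ≤ (p−1)/2, there exists a labeling of the elements of ℤ_p by symbols from {x,y,z} using exactly p−2j labels x, j labels y, and j labels z, such that no element labeled z has its successor (addition of 1) labeled x, no element labeled z has z+2 labeled y, and no element labeled x has its successor labeled y. -/

import Mathlib

/-- A three-element set of labels. -/
inductive Lab | x | y | z
deriving DecidableEq

lemma count_val (p : ℕ) [NeZero p] (P : ℕ → Prop) [DecidablePred P] :
    (Finset.univ.filter fun v : ZMod p => P v.val).card
      = ((Finset.range p).filter P).card := by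
  apply Finset.card_bij (fun v _ => v.val)
  · intro a ha
    simp only [Finset.mem_filter, Finset.mem_range] at ha ⊢
    exact ⟨ZMod.val_lt a, ha.2⟩
  · intro a _ b _ h
    exact ZMod.val_injective p h
  · intro b hb
    simp only [Finset.mem_filter, Finset.mem_range] at hb
    refine ⟨(b : ZMod p), ?_, ?_⟩
    · simp only [Finset.mem_filter, Finset.mem_univ, true_and]
      rw [ZMod.val_natCast, Nat.mod_eq_of_lt hb.1]
      exact hb.2
    · rw [ZMod.val_natCast, Nat.mod_eq_of_lt hb.1]

lemma evens_card (j : ℕ) :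
    ((Finset.range (2*j)).filter fun n => n % 2 = 0).card = j := by
  induction j with
  | zero => simp
  | succ k ih =>
    have : 2 * (k+1) = (2*k + 1) + 1 := by ring
    rw [this, Finset.range_add_one, Finset.range_add_one, Finset.filter_insert,
      Finset.filter_insert]
    have h1 : ¬ (2*k+1) % 2 = 0 := by omega
    have h2 : (2*k) % 2 = 0 := by omega
    rw [if_neg h1, if_pos h2, Finset.card_insert_of_notMem (by simp), ih]

lemma odds_card (j : ℕ) :
    ((Finset.range (2*j)).filter fun n => n % 2 = 1).card = j := by
  induction j with
  | zero => simp
  | succ k ih =>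
    have : 2 * (k+1) = (2*k + 1) + 1 := by ring
    rw [this, Finset.range_add_one, Finset.range_add_one, Finset.filter_insert,
      Finset.filter_insert]
    have h1 : (2*k+1) % 2 = 1 := by omega
    have h2 : ¬ (2*k) % 2 = 1 := by omega
    rw [if_pos h1, if_neg h2, Finset.card_insert_of_notMem (by simp), ih]

theorem stmt5 (p : ℕ) [NeZero p] (hp : p.Prime) (hp3 : 3 ≤ p)
    (j : ℕ) (hj : j ≤ (p - 1) / 2) :
    ∃ ℓ : ZMod p → Lab,
      (Finset.univ.filter fun v => ℓ v = Lab.x).card = p - 2 * j ∧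
      (Finset.univ.filter fun v => ℓ v = Lab.y).card = j ∧
      (Finset.univ.filter fun v => ℓ v = Lab.z).card = j ∧
      (∀ v : ZMod p, ¬(ℓ v = Lab.z ∧ ℓ (v + 1) = Lab.x)) ∧
      (∀ v : ZMod p, ¬(ℓ v = Lab.z ∧ ℓ (v + 2) = Lab.y)) ∧
      (∀ v : ZMod p, ¬(ℓ v = Lab.x ∧ ℓ (v + 1) = Lab.y)) := by
  have hodd : p % 2 = 1 := Nat.odd_iff.mp (hp.odd_of_ne_two (by omega))
  have h2j : 2 * j ≤ p - 1 := by omega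
  haveI : Fact (1 < p) := ⟨by omega⟩
  set ℓ : ZMod p → Lab := fun v =>
    if v.val < 2*j then (if v.val % 2 = 0 then Lab.z else Lab.y) else Lab.x
    with hℓ
  -- label characterizations
  have hx : ∀ v : ZMod p, ℓ v = Lab.x ↔ ¬ v.val < 2*j := by
    intro v; simp only [hℓ]; split_ifs <;> simp_all
  have hy : ∀ v : ZMod p, ℓ v = Lab.y ↔ (v.val < 2*j ∧ v.val % 2 = 1) := by
    intro v; simp only [hℓ]; split_ifs <;> simp_all <;> omega
  have hz : ∀ v : ZMod p, ℓ v = Lab.z ↔ (v.val < 2*j ∧ v.val % 2 = 0) := by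
    intro v; simp only [hℓ]; split_ifs <;> simp_all
  -- successor values
  have hsucc : ∀ v : ZMod p, (v + 1).val = (v.val + 1) % p := by
    intro v; rw [ZMod.val_add, ZMod.val_one]
  have hsucc2 : ∀ v : ZMod p, (v + 2).val = (v.val + 2) % p := by
    intro v
    rw [ZMod.val_add]
    congr 2
    have h2 : ((2 : ℕ) : ZMod p).val = 2 % p := ZMod.val_natCast p 2
    rw [Nat.mod_eq_of_lt (by omega)] at h2
    simpa using h2
  refine ⟨ℓ, ?_, ?_, ?_, ?_, ?_, ?_⟩
  · rw [Finset.filter_congr (fun v _ => by rw [hx v]),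
      count_val p (fun n => ¬ n < 2*j)]
    have : (Finset.range p).filter (fun n => ¬ n < 2*j) = Finset.Ico (2*j) p := by
      ext n; simp [Finset.mem_Ico]; omega
    rw [this, Nat.card_Ico]
  · rw [Finset.filter_congr (fun v _ => by rw [hy v]),
      count_val p (fun n => n < 2*j ∧ n % 2 = 1)]
    have : (Finset.range p).filter (fun n => n < 2*j ∧ n % 2 = 1)
        = (Finset.range (2*j)).filter (fun n => n % 2 = 1) := by
      ext n; simp; omega
    rw [this, odds_card]
  · rw [Finset.filter_congr (fun v _ => by rw [hz v]),
      count_val p (fun n => n < 2*j ∧ n % 2 = 0)]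
    have : (Finset.range p).filter (fun n => n < 2*j ∧ n % 2 = 0)
        = (Finset.range (2*j)).filter (fun n => n % 2 = 0) := by
      ext n; simp; omega
    rw [this, evens_card]
  · rintro v ⟨h1, h2⟩
    rw [hz] at h1
    rw [hx, hsucc] at h2
    have : (v.val + 1) % p = v.val + 1 := Nat.mod_eq_of_lt (by omega)
    omega
  · rintro v ⟨h1, h2⟩
    rw [hz] at h1
    rw [hy, hsucc2] at h2
    have : (v.val + 2) % p = v.val + 2 := Nat.mod_eq_of_lt (by omega)
    omega
  · rintro v ⟨h1, h2⟩
    rw [hx] at h1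
    rw [hy, hsucc] at h2
    have hv := ZMod.val_lt v
    rcases Nat.lt_or_ge (v.val + 1) p with h | h
    · rw [Nat.mod_eq_of_lt h] at h2
      omega
    · have he : v.val + 1 = p := by omega
      rw [he, Nat.mod_self] at h2
      omega
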